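/- Let C be a cartesian closed category. Let (f₀, f₁ : A ⇉ B) and (f₀', f₁' : A' ⇉ B') be reflexive parallel pairs in C admitting coequalizers c : B → Q and c' : B' → Q' respectively. Then c × c' : B × B' → Q × Q' is a coequalizer of the parallel pair (f₀ × f₀', f₁ × f₁' : A × A' ⇉ B × B'). In other words, reflexive coequalizers in a cartesian closed category commute with binary products. -/

import Mathlib

open CategoryTheory CategoryTheory.Limits MonoidalCategory

noncomputable section

/-- In a category with chosen finite products, the tensor functor `X ⊗ -` is naturally
isomorphic to the binary product functor `X ⨯ -`. -/
def tensorLeftIsoProdFunctor {C : Type*} [Category C] [CartesianMonoidalCategory C] (X : C) :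
    tensorLeft X ≅ prod.functor.obj X :=
  NatIso.ofComponents
    (fun Y => ({
        hom := prod.lift (CartesianMonoidalCategory.fst X Y) (CartesianMonoidalCategory.snd X Y)
        inv := CartesianMonoidalCategory.lift prod.fst prod.snd
        hom_inv_id := by
          apply CartesianMonoidalCategory.hom_ext
          · simp; erw [prod.lift_fst]
          · simp; erw [prod.lift_snd]
        inv_hom_id := by apply Limits.prod.hom_ext <;> simp } : X ⊗ Y ≅ X ⨯ Y))
    (fun {Y Z} f => by
      show X ◁ f ≫ prod.lift (CartesianMonoidalCategory.fst X Z) (CartesianMonoidalCategory.snd X Z)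
        = prod.lift (CartesianMonoidalCategory.fst X Y) (CartesianMonoidalCategory.snd X Y) ≫ prod.map (𝟙 X) f
      apply Limits.prod.hom_ext <;> simp)

instance prodFunctorObjPreservesColimits {C : Type*} [Category C] [CartesianMonoidalCategory C]
    [MonoidalClosed C] (X : C) : PreservesColimits (prod.functor.obj X) :=
  preservesColimits_of_natIso (tensorLeftIsoProdFunctor X)

/-- The functor `- ⨯ X` is naturally isomorphic to `X ⨯ -`. -/
def prodFunctorFlipIso {C : Type*} [Category C] [CartesianMonoidalCategory C] (X : C) :
    prod.functor.obj X ≅ prod.functor.flip.obj X :=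
  NatIso.ofComponents (fun Y => prod.braiding X Y) (fun {Y Z} f => by
    show prod.map (𝟙 X) f ≫ (prod.braiding X Z).hom = (prod.braiding X Y).hom ≫ prod.map f (𝟙 X)
    apply Limits.prod.hom_ext <;> simp)

instance prodFunctorFlipObjPreservesColimits {C : Type*} [Category C] [CartesianMonoidalCategory C]
    [MonoidalClosed C] (X : C) : PreservesColimits (prod.functor.flip.obj X) :=
  preservesColimits_of_natIso (prodFunctorFlipIso X)

/-- In a cartesian closed category, reflexive coequalizers commute with binary products:
given reflexive parallel pairs `(f₀, f₁ : A ⇉ B)` (with common section `δ`) and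
`(f₀', f₁' : A' ⇉ B')` (with common section `δ'`) admitting coequalizers `c : B ⟶ Q` and
`c' : B' ⟶ Q'`, the product morphism `prod.map c.π c'.π : A ⨯ A' ⟶ Q ⨯ Q'` is a coequalizer
of the parallel pair `(prod.map f₀ f₀', prod.map f₁ f₁')`. -/
theorem reflexive_coequalizers_commute_with_binary_products
    {C : Type*} [Category C] [CartesianMonoidalCategory C] [MonoidalClosed C]
    {A B A' B' : C} (f₀ f₁ : A ⟶ B) (f₀' f₁' : A' ⟶ B')
    (δ : B ⟶ A) (hδ₀ : δ ≫ f₀ = 𝟙 B) (hδ₁ : δ ≫ f₁ = 𝟙 B)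
    (δ' : B' ⟶ A') (hδ₀' : δ' ≫ f₀' = 𝟙 B') (hδ₁' : δ' ≫ f₁' = 𝟙 B')
    (c : Cofork f₀ f₁) (hc : IsColimit c)
    (c' : Cofork f₀' f₁') (hc' : IsColimit c') :
    Nonempty (IsColimit (Cofork.ofπ (prod.map c.π c'.π)
      (show prod.map f₀ f₀' ≫ prod.map c.π c'.π = prod.map f₁ f₁' ≫ prod.map c.π c'.π by
        rw [prod.map_map, prod.map_map, c.condition, c'.condition]))) := by
  -- normalize the coequalizers to `Cofork.ofπ` form
  have hc₀ : IsColimit (Cofork.ofπ c.π c.condition) :=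
    hc.ofIsoColimit (Cofork.ext (Iso.refl _) (by simp))
  have hc₀' : IsColimit (Cofork.ofπ c'.π c'.condition) :=
    hc'.ofIsoColimit (Cofork.ext (Iso.refl _) (by simp))
  -- `- ⨯ B'` applied to `c`
  have h1 : IsColimit (Cofork.ofπ ((prod.functor.flip.obj B').map c.π)
      (by simp only [← Functor.map_comp, c.condition]) :
      Cofork ((prod.functor.flip.obj B').map f₀) ((prod.functor.flip.obj B').map f₁)) :=
    isColimitCoforkMapOfIsColimit (prod.functor.flip.obj B') c.condition hc₀
  -- `- ⨯ A'` applied to `c`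
  have h1' : IsColimit (Cofork.ofπ ((prod.functor.flip.obj A').map c.π)
      (by simp only [← Functor.map_comp, c.condition]) :
      Cofork ((prod.functor.flip.obj A').map f₀) ((prod.functor.flip.obj A').map f₁)) :=
    isColimitCoforkMapOfIsColimit (prod.functor.flip.obj A') c.condition hc₀
  -- `Q ⨯ -` applied to `c'`
  have h2 : IsColimit (Cofork.ofπ ((prod.functor.obj c.pt).map c'.π)
      (by simp only [← Functor.map_comp, c'.condition]) :
      Cofork ((prod.functor.obj c.pt).map f₀') ((prod.functor.obj c.pt).map f₁')) :=
    isColimitCoforkMapOfIsColimit (prod.functor.obj c.pt) c'.condition hc₀'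
  have e0 : prod.map f₀ (𝟙 B') = prod.map (𝟙 A) δ' ≫ prod.map f₀ f₀' := by
    rw [prod.map_map, Category.id_comp, hδ₀']
  have e1 : prod.map f₁ (𝟙 B') = prod.map (𝟙 A) δ' ≫ prod.map f₁ f₁' := by
    rw [prod.map_map, Category.id_comp, hδ₁']
  have e0' : prod.map (𝟙 B) f₀' = prod.map δ (𝟙 A') ≫ prod.map f₀ f₀' := by
    rw [prod.map_map, Category.id_comp, hδ₀]
  have e1' : prod.map (𝟙 B) f₁' = prod.map δ (𝟙 A') ≫ prod.map f₁ f₁' := by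
    rw [prod.map_map, Category.id_comp, hδ₁]
  have esplit : prod.map c.π c'.π = prod.map c.π (𝟙 B') ≫ prod.map (𝟙 c.pt) c'.π := by simp
  have comm0 : prod.map c.π (𝟙 A') ≫ prod.map (𝟙 c.pt) f₀'
      = prod.map (𝟙 B) f₀' ≫ prod.map c.π (𝟙 B') := by simp
  have comm1 : prod.map c.π (𝟙 A') ≫ prod.map (𝟙 c.pt) f₁'
      = prod.map (𝟙 B) f₁' ≫ prod.map c.π (𝟙 B') := by simp
  -- first, every cofork over the product pair coequalizes `(f₀ ⨯ 𝟙, f₁ ⨯ 𝟙)`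
  have w1 : ∀ s : Cofork (prod.map f₀ f₀') (prod.map f₁ f₁'),
      prod.map f₀ (𝟙 B') ≫ s.π = prod.map f₁ (𝟙 B') ≫ s.π := fun s => by
    rw [e0, e1, Category.assoc, Category.assoc, s.condition]
  -- the first intermediate descent
  let k : ∀ s : Cofork (prod.map f₀ f₀') (prod.map f₁ f₁'), (c.pt ⨯ B') ⟶ s.pt :=
    fun s => Cofork.IsColimit.desc h1 s.π (w1 s)
  have hk : ∀ s : Cofork (prod.map f₀ f₀') (prod.map f₁ f₁'),
      prod.map c.π (𝟙 B') ≫ k s = s.π :=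
    fun s => Cofork.IsColimit.π_desc' h1 s.π (w1 s)
  -- `k s` coequalizes `(𝟙 ⨯ f₀', 𝟙 ⨯ f₁')`
  have w2 : ∀ s : Cofork (prod.map f₀ f₀') (prod.map f₁ f₁'),
      prod.map (𝟙 c.pt) f₀' ≫ k s = prod.map (𝟙 c.pt) f₁' ≫ k s := fun s => by
    apply Cofork.IsColimit.hom_ext h1'
    show prod.map c.π (𝟙 A') ≫ prod.map (𝟙 c.pt) f₀' ≫ k s
      = prod.map c.π (𝟙 A') ≫ prod.map (𝟙 c.pt) f₁' ≫ k s
    rw [← Category.assoc, comm0, ← Category.assoc, comm1, Category.assoc, Category.assoc,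
      hk s, e0', e1', Category.assoc, Category.assoc, s.condition]
  -- the final descent
  let desc : ∀ s : Cofork (prod.map f₀ f₀') (prod.map f₁ f₁'), (c.pt ⨯ c'.pt) ⟶ s.pt :=
    fun s => Cofork.IsColimit.desc h2 (k s) (w2 s)
  have hdesc : ∀ s : Cofork (prod.map f₀ f₀') (prod.map f₁ f₁'),
      prod.map (𝟙 c.pt) c'.π ≫ desc s = k s :=
    fun s => Cofork.IsColimit.π_desc' h2 (k s) (w2 s)
  have fac : ∀ s : Cofork (prod.map f₀ f₀') (prod.map f₁ f₁'),
      prod.map c.π c'.π ≫ desc s = s.π := fun s => by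
    rw [esplit, Category.assoc, hdesc s, hk s]
  refine ⟨Cofork.IsColimit.mk _ desc fac (fun s m hm => ?_)⟩
  have hm' : prod.map c.π c'.π ≫ m = s.π := hm
  apply Cofork.IsColimit.hom_ext h2
  apply Cofork.IsColimit.hom_ext h1
  show prod.map c.π (𝟙 B') ≫ prod.map (𝟙 c.pt) c'.π ≫ m
    = prod.map c.π (𝟙 B') ≫ prod.map (𝟙 c.pt) c'.π ≫ desc s
  rw [← Category.assoc, ← Category.assoc, ← esplit, hm', fac s]

end
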